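/- Let $p$ be a prime, $s \geq 0$, and $i, j$ positive integers. With $u \wedge v = \max\{a+b+1 : 0 \leq a \leq u-1,\ 0 \leq b \leq v-1,\ p \nmid \binom{a+b}{a}\}$, the integer $(ip^s) \wedge j$ is divisible by $p^s$. -/

import Mathlib

/-- `wedge p u v` is the maximum of `a + b + 1` over `0 ≤ a ≤ u-1`, `0 ≤ b ≤ v-1`
with `p ∤ (a+b).choose a`, extended by `wedge p 0 v = wedge p u 0 = 0`. -/
def wedge (p u v : ℕ) : ℕ :=
  if u = 0 ∨ v = 0 then 0
  else ((Finset.range u ×ˢ Finset.range v).filter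
      (fun ab => ¬ p ∣ Nat.choose (ab.1 + ab.2) ab.1)).sup
      (fun ab => ab.1 + ab.2 + 1)

/-- the `m`-th base-`p` digit of `n`. -/
def digit (p m n : ℕ) : ℕ := n / p ^ m % p


open Finset

lemma dvd_choose_small {p u v : ℕ} (hp : p.Prime) (hu : u < p) :
    p ∣ u.choose v ↔ u < v := by
  constructor
  · intro h
    by_contra hlt
    push_neg at hlt
    have h2 : u.choose v ∣ u.factorial := by
      have := Nat.choose_mul_factorial_mul_factorial hlt
      exact ⟨v.factorial * (u - v).factorial, by rw [← this]; ring⟩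
    have := (Nat.Prime.dvd_factorial hp).mp (h.trans h2)
    omega
  · intro h; rw [Nat.choose_eq_zero_of_lt h]; exact dvd_zero p

lemma not_dvd_choose_iff {p : ℕ} (hp : p.Prime) (n k : ℕ) :
    ¬ p ∣ n.choose k ↔ ∀ m, k / p ^ m % p ≤ n / p ^ m % p := by
  haveI : Fact p.Prime := ⟨hp⟩
  obtain ⟨a, ha⟩ : ∃ a, n < p ^ a ∧ k < p ^ a := by
    refine ⟨n + k + 1, ?_, ?_⟩ <;>
      · have := Nat.lt_pow_self hp.one_lt (n := n + k + 1); omega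
  have hl := Choose.choose_modEq_prod_range_choose_nat (p := p) ha.1 ha.2
  have hdvd : p ∣ n.choose k ↔ p ∣ ∏ i ∈ range a, (n / p ^ i % p).choose (k / p ^ i % p) := by
    constructor <;> intro h
    · exact (Nat.modEq_zero_iff_dvd).mp ((Nat.modEq_zero_iff_dvd.mpr h).symm.trans hl).symm
    · exact (Nat.modEq_zero_iff_dvd).mp (hl.trans (Nat.modEq_zero_iff_dvd.mpr h))
  rw [hdvd, hp.prime.dvd_finset_prod_iff]
  constructor
  · intro h m
    by_cases hm : m < a
    · by_contra hlt
      exact h ⟨m, mem_range.mpr hm, (dvd_choose_small hp (Nat.mod_lt _ hp.pos)).mpr (by omega)⟩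
    · have : k / p ^ m = 0 := Nat.div_eq_of_lt (lt_of_lt_of_le ha.2 (Nat.pow_le_pow_right hp.pos (by omega)))
      simp [this]
  · rintro h ⟨m, -, hdm⟩
    have := (dvd_choose_small hp (Nat.mod_lt _ hp.pos)).mp hdm
    have := h m
    omega





lemma digit_eq (p m n : ℕ) : digit p m n = n % p ^ (m + 1) / p ^ m := by
  rw [digit, pow_succ, Nat.mod_mul_right_div_self]

-- D1: adding p^k doesn't overflow p^m when digit k < p-1
lemma mod_add_pow_lt {p k m x : ℕ} (hp : 2 ≤ p) (hk : k < m)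
    (hd : digit p k x < p - 1) : x % p ^ m + p ^ k < p ^ m := by
  have hpk : 0 < p ^ k := Nat.pow_pos (by omega)
  set r := x % p ^ m with hr
  have hdr : digit p k r = digit p k x := by
    rw [digit, digit, hr]
    have : m = k + (m - k) := by omega
    rw [this, pow_add, Nat.mod_mul_right_div_self,
      Nat.mod_mod_of_dvd _ (dvd_pow_self p (by omega))]
  have h1 : r % p ^ (k + 1) < (p - 1) * p ^ k := by
    have := digit_eq p k r
    rw [this] at hdr
    have := (Nat.div_lt_iff_lt_mul hpk).mp (by omega : r % p ^ (k+1) / p ^ k < p - 1)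
    omega
  have h2 : r = p ^ (k + 1) * (r / p ^ (k + 1)) + r % p ^ (k + 1) := (Nat.div_add_mod _ _).symm
  have h3 : r % p ^ (k + 1) + p ^ k < p ^ (k + 1) := by
    have hq : p - 1 + 1 = p := by omega
    have : (p - 1) * p ^ k + p ^ k = p ^ (k + 1) := by
      calc (p - 1) * p ^ k + p ^ k = (p - 1 + 1) * p ^ k := by ring
        _ = p ^ (k + 1) := by rw [hq, pow_succ]; ring
    omega
  have h4 : r / p ^ (k + 1) + 1 ≤ p ^ (m - k - 1) := by
    have hrm : r < p ^ m := Nat.mod_lt _ (Nat.pow_pos (by omega))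
    have : r < p ^ (m - k - 1) * p ^ (k + 1) := by
      rw [← pow_add]; convert hrm using 2; omega
    have := Nat.div_lt_iff_lt_mul ((Nat.pow_pos (show 0 < p by omega) : 0 < p ^ (k+1))) |>.mpr this
    omega
  have h5 : (r / p ^ (k + 1) + 1) * p ^ (k + 1) ≤ p ^ m := by
    calc (r / p ^ (k + 1) + 1) * p ^ (k + 1) ≤ p ^ (m - k - 1) * p ^ (k + 1) :=
        Nat.mul_le_mul_right _ h4
      _ = p ^ m := by rw [← pow_add]; congr 1; omega
  nlinarith [h2, h3]

lemma digit_add_pow_of_lt {p k m x : ℕ} (hp : 2 ≤ p) (hm : m < k) :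
    digit p m (x + p ^ k) = digit p m x := by
  rw [digit_eq, digit_eq]
  congr 1
  have : p ^ k = p ^ (m + 1) * p ^ (k - m - 1) := by rw [← pow_add]; congr 1; omega
  rw [this, Nat.add_mul_mod_self_left]

lemma digit_add_pow_self {p k x : ℕ} (hp : 2 ≤ p) (hd : digit p k x < p - 1) :
    digit p k (x + p ^ k) = digit p k x + 1 := by
  rw [digit, digit, Nat.add_div_right _ (Nat.pow_pos (show 0 < p by omega) : 0 < p ^ k)]
  rw [digit] at hd
  have h1 : (x / p ^ k) % p + 1 < p := by omega
  conv_lhs => rw [← Nat.div_add_mod (x / p ^ k) p]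
  rw [Nat.add_assoc, Nat.mul_add_mod, Nat.mod_eq_of_lt h1]


lemma digit_add_pow_of_gt {p k m x : ℕ} (hp : 2 ≤ p) (hk : k < m)
    (hd : digit p k x < p - 1) : digit p m (x + p ^ k) = digit p m x := by
  have h1 := mod_add_pow_lt hp hk hd
  have hpm : 0 < p ^ m := Nat.pow_pos (by omega)
  have key : (x + p ^ k) / p ^ m = x / p ^ m := by
    conv_lhs => rw [show x + p ^ k = p ^ m * (x / p ^ m) + (x % p ^ m + p ^ k) by
      have := Nat.div_add_mod x (p ^ m); omega]
    rw [Nat.mul_add_div hpm, Nat.div_eq_of_lt h1, add_zero]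
  rw [digit, digit, key]

lemma all_digits_dvd {p n : ℕ} (hp : 2 ≤ p) :
    ∀ s, (∀ k, k < s → p - 1 ≤ digit p k n) → p ^ s ∣ n + 1 := by
  intro s
  induction s with
  | zero => intro _; simp
  | succ s ih =>
    intro h
    obtain ⟨c, hc⟩ := ih (fun k hk => h k (by omega))
    set P := p ^ s with hP
    have hPpos : 0 < P := Nat.pow_pos (by omega)
    have hc1 : 1 ≤ c := by
      rcases Nat.eq_zero_or_pos c with h0 | h0
      · simp [h0] at hc
      · exact h0
    have hds : digit p s n = p - 1 := by
      have h1 := h s (by omega)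
      have h2 : digit p s n < p := Nat.mod_lt _ (by omega)
      omega
    have hdiv : n / P = c - 1 := by
      have hA : P ≤ P * c := Nat.le_mul_of_pos_right _ hc1
      have h1 : n = P * (c - 1) + (P - 1) := by
        have h2 : P * (c - 1) = P * c - P * 1 := by rw [Nat.mul_sub]
        rw [mul_one] at h2
        omega
      rw [h1, Nat.mul_add_div hPpos, Nat.div_eq_of_lt (by omega), add_zero]
    have hpc : p ∣ c := by
      rw [digit, hdiv] at hds
      have h2 := Nat.div_add_mod (c - 1) p
      refine ⟨(c - 1) / p + 1, ?_⟩
      rw [Nat.mul_add, Nat.mul_one]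
      omega
    obtain ⟨t, ht⟩ := hpc
    exact ⟨t, by rw [hc, ht, pow_succ, hP]; ring⟩


theorem stmt_7 (p : ℕ) (hp : p.Prime) (s i j : ℕ) (hi : 1 ≤ i) (hj : 1 ≤ j) :
    p ^ s ∣ wedge p (i * p ^ s) j := by
  have hp2 : 2 ≤ p := hp.two_le
  have hps : 0 < p ^ s := Nat.pow_pos (by omega)
  have hu : i * p ^ s ≠ 0 := by positivity
  rw [wedge, if_neg (by push_neg; exact ⟨hu, by omega⟩)]
  set f : ℕ × ℕ → ℕ := fun ab => ab.1 + ab.2 + 1 with hf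
  set S := ((Finset.range (i * p ^ s) ×ˢ Finset.range j).filter
      (fun ab => ¬ p ∣ Nat.choose (ab.1 + ab.2) ab.1)) with hS
  have h00 : ((0, 0) : ℕ × ℕ) ∈ S := by
    rw [hS, Finset.mem_filter]
    refine ⟨Finset.mem_product.mpr ⟨Finset.mem_range.mpr (by omega), Finset.mem_range.mpr (by omega)⟩, ?_⟩
    simpa using hp.one_lt.ne'
  obtain ⟨ab, hab, habsup⟩ := Finset.exists_mem_eq_sup S ⟨_, h00⟩ f
  rw [habsup]
  obtain ⟨a, b⟩ := ab
  simp only [hf] at habsup ⊢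
  by_contra hcon
  have hex : ∃ k, k < s ∧ digit p k (a + b) < p - 1 := by
    by_contra hne
    push_neg at hne
    exact hcon (all_digits_dvd hp2 s hne)
  obtain ⟨k, hks, hdk⟩ := hex
  rw [hS, Finset.mem_filter, Finset.mem_product, Finset.mem_range, Finset.mem_range] at hab
  obtain ⟨⟨ha, hb⟩, hnd⟩ := hab
  simp only at ha hb hnd
  have hdigits : ∀ m, digit p m a ≤ digit p m (a + b) :=
    (not_dvd_choose_iff hp _ _).mp hnd
  have hdka : digit p k a < p - 1 := lt_of_le_of_lt (hdigits k) hdk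
  -- new pair (a + p^k, b)
  have hnd' : ¬ p ∣ Nat.choose (a + p ^ k + b) (a + p ^ k) := by
    rw [not_dvd_choose_iff hp]
    intro m
    show digit p m (a + p ^ k) ≤ digit p m (a + p ^ k + b)
    have heq : a + p ^ k + b = (a + b) + p ^ k := by ring
    rcases lt_trichotomy m k with hm | hm | hm
    · rw [show (digit p m (a + p ^ k) = digit p m a) from digit_add_pow_of_lt hp2 hm,
        heq, digit_add_pow_of_lt hp2 hm]
      exact hdigits m
    · subst hm
      rw [digit_add_pow_self hp2 hdka, heq, digit_add_pow_self hp2 hdk]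
      exact Nat.succ_le_succ (hdigits m)
    · rw [digit_add_pow_of_gt hp2 hm hdka, heq, digit_add_pow_of_gt hp2 hm hdk]
      exact hdigits m
  have ha' : a + p ^ k < i * p ^ s := by
    have h1 := mod_add_pow_lt hp2 hks hdka
    have h2 := Nat.div_add_mod a (p ^ s)
    have h3 : a / p ^ s + 1 ≤ i := by
      have := (Nat.div_lt_iff_lt_mul hps).mpr (by omega : a < i * p ^ s)
      omega
    calc a + p ^ k = p ^ s * (a / p ^ s) + (a % p ^ s + p ^ k) := by omega
      _ < p ^ s * (a / p ^ s) + p ^ s := by omega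
      _ = p ^ s * (a / p ^ s + 1) := by ring
      _ ≤ p ^ s * i := Nat.mul_le_mul_left _ h3
      _ = i * p ^ s := by ring
  have hmem' : ((a + p ^ k, b) : ℕ × ℕ) ∈ S := by
    rw [hS, Finset.mem_filter]
    exact ⟨Finset.mem_product.mpr ⟨Finset.mem_range.mpr ha', Finset.mem_range.mpr hb⟩, hnd'⟩
  have hle := Finset.le_sup (f := f) hmem'
  rw [habsup] at hle
  simp only [hf] at hle
  have : 0 < p ^ k := Nat.pow_pos (by omega)
  omega
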